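/- Let φ : F₂ → PSL(2,ℤ) be the group homomorphism from the free group on two generators R, T determined by φ(R) = r and φ(T) = t. Then φ is surjective and its kernel is the normal closure in F₂ of the set {R², (TR)³}. -/

import Mathlib

open Matrix MatrixGroups
open scoped LinearAlgebra.Projectivization

/-- The matrix `S = [[0, -1], [1, 0]]` as an element of `SL(2, ℤ)`. -/
def Smat : SL(2, ℤ) := ⟨!![0, -1; 1, 0], by norm_num [Matrix.det_fin_two_of]⟩

/-- The matrix `T = [[1, 1], [0, 1]]` as an element of `SL(2, ℤ)`. -/
def Tmat : SL(2, ℤ) := ⟨!![1, 1; 0, 1], by norm_num [Matrix.det_fin_two_of]⟩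

/-- The central subgroup `{I, -I}` of `SL(2, ℤ)`. -/
def pmOne : Subgroup SL(2, ℤ) := Subgroup.zpowers (-1)

instance : pmOne.Normal := ⟨by
  intro x hx g
  obtain ⟨k, rfl⟩ := Subgroup.mem_zpowers_iff.mp hx
  have h : g * (-1 : SL(2, ℤ)) ^ k * g⁻¹ = (-1) ^ k := by
    rw [← ((Commute.neg_one_left g).zpow_left k).eq, mul_assoc, mul_inv_cancel, mul_one]
  rw [h]
  exact Subgroup.zpow_mem _ (Subgroup.mem_zpowers _) k⟩

/-- `PSL(2, ℤ)`: the quotient of `SL(2, ℤ)` by its central subgroup `{I, -I}`. -/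
abbrev PSL2Z := SL(2, ℤ) ⧸ pmOne

/-- The image of `S = [[0, -1], [1, 0]]` in `PSL(2, ℤ)`. -/
def r : PSL2Z := QuotientGroup.mk Smat

/-- The image of `T = [[1, 1], [0, 1]]` in `PSL(2, ℤ)`. -/
def t : PSL2Z := QuotientGroup.mk Tmat

/-- The free group on the two generators `R` (indexed by `false`) and `T` (indexed by
`true`), mapping to `PSL(2, ℤ)` via `R ↦ r`, `T ↦ t`. -/
def φ : FreeGroup Bool →* PSL2Z := FreeGroup.lift (fun b => bif b then t else r)

lemma neg_one_sq' : ((-1 : SL(2,ℤ)) * (-1)) = 1 := by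
  ext i j
  simp [Matrix.SpecialLinearGroup.coe_mul]

lemma mem_pmOne_iff {g : SL(2,ℤ)} : g ∈ pmOne ↔ g = 1 ∨ g = -1 := by
  constructor
  · rintro ⟨k, rfl⟩
    have h2 : ((-1 : SL(2,ℤ)))^(2:ℤ) = 1 := by
      rw [zpow_two]; exact neg_one_sq'
    rcases Int.even_or_odd k with ⟨m, rfl⟩ | ⟨m, rfl⟩
    · left
      have : (m + m) = 2 * m := by ring
      show ((-1 : SL(2,ℤ)))^(m+m) = 1
      rw [this, _root_.zpow_mul, h2, _root_.one_zpow]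
    · right
      have : (2*m + 1) = 2 * m + 1 := rfl
      show ((-1 : SL(2,ℤ)))^(2*m+1) = -1
      rw [_root_.zpow_add, _root_.zpow_mul, h2, _root_.one_zpow, one_mul, zpow_one]
  · rintro (rfl | rfl)
    · exact one_mem _
    · exact Subgroup.mem_zpowers _

lemma Smat_eq : Smat = ModularGroup.S := rfl
lemma Tmat_eq : Tmat = ModularGroup.T := rfl

lemma Smat_sq : Smat * Smat = (-1 : SL(2,ℤ)) := by
  ext i j
  simp only [Matrix.SpecialLinearGroup.coe_mul]; simp only [Smat]
  fin_cases i <;> fin_cases j <;>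
    simp [Matrix.mul_apply, Fin.sum_univ_two]

lemma coe_Tzpow (n : ℤ) : ((Tmat ^ n : SL(2,ℤ)) : Matrix (Fin 2) (Fin 2) ℤ) = !![1, n; 0, 1] := by
  rw [Tmat_eq]; exact ModularGroup.coe_T_zpow n

lemma mem_closure_ST (A : SL(2,ℤ)) : A ∈ Subgroup.closure ({Smat, Tmat} : Set SL(2,ℤ)) := by
  set H := Subgroup.closure ({Smat, Tmat} : Set SL(2,ℤ)) with hH
  have hS : Smat ∈ H := Subgroup.subset_closure (by simp)
  have hT : Tmat ∈ H := Subgroup.subset_closure (by simp)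
  suffices h : ∀ n : ℕ, ∀ A : SL(2,ℤ), ((A : Matrix (Fin 2) (Fin 2) ℤ) 1 0).natAbs = n → A ∈ H by
    exact h _ A rfl
  intro n
  induction n using Nat.strong_induction_on with
  | _ n ih =>
    intro A hA
    by_cases hc : (A : Matrix (Fin 2) (Fin 2) ℤ) 1 0 = 0
    · -- c = 0 : A = ± T^b
      have hdet : (A : Matrix (Fin 2) (Fin 2) ℤ).det = 1 := A.2
      rw [Matrix.det_fin_two, hc] at hdet
      simp only [mul_zero, sub_zero] at hdet
      rcases Int.mul_eq_one_iff_eq_one_or_neg_one.mp hdet with ⟨h1, h2⟩ | ⟨h1, h2⟩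
      · have : A = Tmat ^ ((A : Matrix (Fin 2) (Fin 2) ℤ) 0 1) := by
          ext i j
          rw [coe_Tzpow]
          fin_cases i <;> fin_cases j <;> simp [h1, h2, hc]
        rw [this]; exact zpow_mem hT _
      · have : A = (Smat * Smat) * Tmat ^ (-(A : Matrix (Fin 2) (Fin 2) ℤ) 0 1) := by
          ext i j
          rw [Matrix.SpecialLinearGroup.coe_mul, Smat_sq, coe_Tzpow]
          fin_cases i <;> fin_cases j <;>
            simp [h1, h2, hc, Matrix.mul_apply, Fin.sum_univ_two]
        rw [this]
        exact mul_mem (mul_mem hS hS) (zpow_mem hT _)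
    · -- c ≠ 0 : euclidean step
      set a := (A : Matrix (Fin 2) (Fin 2) ℤ) 0 0 with ha
      set c := (A : Matrix (Fin 2) (Fin 2) ℤ) 1 0 with hcdef
      set q := a / c with hq
      set B := Smat * (Tmat ^ (-q) * A) with hB
      have hBc : (B : Matrix (Fin 2) (Fin 2) ℤ) 1 0 = a % c := by
        rw [hB]
        simp only [Matrix.SpecialLinearGroup.coe_mul, coe_Tzpow]; simp only [Smat]
        rw [Int.emod_def]
        simp [Matrix.mul_apply, Matrix.vecMul, dotProduct, Fin.sum_univ_two, ← ha, ← hcdef]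
        ring
      have habs : (a % c).natAbs < n := by
        rw [← hA]
        have h1 : (a % c).natAbs < c.natAbs := by
          rcases lt_or_gt_of_ne hc with h | h
          · have := Int.emod_lt_of_pos a (b := -c) (by omega)
            have h2 := Int.emod_nonneg a hc
            rw [Int.emod_neg] at this
            omega
          · have := Int.emod_lt_of_pos a h
            have h2 := Int.emod_nonneg a hc
            omega
        exact h1
      have hBmem : B ∈ H := ih _ habs B (by rw [hBc])
      have : A = Tmat ^ q * (Smat⁻¹ * B) := by
        rw [hB]
        group
      rw [this]
      exact mul_mem (zpow_mem hT _) (mul_mem (inv_mem hS) hBmem)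



noncomputable def ψ : SL(2,ℤ) →* PSL2Z := QuotientGroup.mk' pmOne

lemma ψ_eq (M : SL(2,ℤ)) : ψ M = QuotientGroup.mk M := rfl

lemma ψ_eq_ψ {M X : SL(2,ℤ)} : ψ M = ψ X ↔ M = X ∨ M = -X := by
  rw [show ψ = QuotientGroup.mk' pmOne from rfl, QuotientGroup.mk'_eq_mk']
  constructor
  · rintro ⟨z, hz, rfl⟩
    rcases mem_pmOne_iff.mp hz with rfl | rfl
    · left; rw [mul_one]
    · right
      ext i j
      simp [Matrix.SpecialLinearGroup.coe_mul]
  · rintro (rfl | h)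
    · exact ⟨1, one_mem _, mul_one _⟩
    · refine ⟨-1, Subgroup.mem_zpowers _, ?_⟩
      rw [h]
      ext i j
      simp [Matrix.SpecialLinearGroup.coe_mul]

lemma φ_R : φ (FreeGroup.of false) = r := by simp [φ]
lemma φ_T : φ (FreeGroup.of true) = t := by simp [φ]

lemma r_eq : r = ψ Smat := rfl
lemma t_eq : t = ψ Tmat := rfl

lemma ψ_neg_one : ψ (-1 : SL(2,ℤ)) = 1 := by
  rw [show ψ = QuotientGroup.mk' pmOne from rfl]
  rw [QuotientGroup.mk'_apply, QuotientGroup.eq_one_iff]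
  exact Subgroup.mem_zpowers _

lemma r_sq : r * r = 1 := by
  rw [r_eq, ← _root_.map_mul, Smat_sq, ψ_neg_one]

lemma TS_cube : (Tmat * Smat) * ((Tmat * Smat) * (Tmat * Smat)) = (-1 : SL(2,ℤ)) := by
  ext i j
  simp only [Matrix.SpecialLinearGroup.coe_mul]; simp only [Smat, Tmat]
  fin_cases i <;> fin_cases j <;>
    simp [Matrix.mul_apply, Fin.sum_univ_two]

lemma tr_cube : (t * r) * ((t * r) * (t * r)) = 1 := by
  rw [t_eq, r_eq, ← _root_.map_mul, ← _root_.map_mul, ← _root_.map_mul, TS_cube, ψ_neg_one]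

lemma φ_surj : Function.Surjective φ := by
  rw [← MonoidHom.range_eq_top]  -- guess name
  rw [Subgroup.eq_top_iff']
  intro g
  obtain ⟨A, rfl⟩ : ∃ A : SL(2,ℤ), ψ A = g := QuotientGroup.mk'_surjective pmOne g
  have hA := mem_closure_ST A
  have : ψ A ∈ Subgroup.closure (ψ '' {Smat, Tmat}) := by
    rw [← MonoidHom.map_closure]
    exact ⟨A, hA, rfl⟩
  refine Subgroup.closure_le (K := φ.range) (k := ψ '' {Smat, Tmat}) |>.mpr ?_ this
  rintro x ⟨M, hM, rfl⟩
  rcases hM with rfl | rfl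
  · exact ⟨FreeGroup.of false, φ_R⟩
  · exact ⟨FreeGroup.of true, φ_T⟩

def NN : Subgroup (FreeGroup Bool) := Subgroup.normalClosure
  {FreeGroup.of false ^ 2, (FreeGroup.of true * FreeGroup.of false) ^ 3}

instance : NN.Normal := Subgroup.normalClosure_normal

abbrev Q := FreeGroup Bool ⧸ NN

noncomputable def μ : FreeGroup Bool →* Q := QuotientGroup.mk' NN

lemma μ_surj : Function.Surjective μ := QuotientGroup.mk'_surjective NN

noncomputable def xx : Q := μ (FreeGroup.of false)
noncomputable def yy : Q := μ (FreeGroup.of true * FreeGroup.of false)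

lemma xx_sq : xx * xx = 1 := by
  rw [xx, ← _root_.map_mul, ← pow_two]
  rw [show μ = QuotientGroup.mk' NN from rfl, QuotientGroup.mk'_apply, QuotientGroup.eq_one_iff]
  exact Subgroup.subset_normalClosure (by simp)

lemma yy_cube : yy * (yy * yy) = 1 := by
  have h : yy * (yy * yy) = yy ^ 3 := by rw [pow_succ, pow_two, mul_assoc]
  rw [h, yy, ← map_pow]
  rw [show μ = QuotientGroup.mk' NN from rfl, QuotientGroup.mk'_apply, QuotientGroup.eq_one_iff]
  exact Subgroup.subset_normalClosure (by simp)

lemma xx_inv : xx⁻¹ = xx := by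
  rw [inv_eq_iff_mul_eq_one, xx_sq]

lemma yy_inv : yy⁻¹ = yy * yy := by
  rw [inv_eq_iff_mul_eq_one, ← mul_assoc]
  rw [mul_assoc] at *
  have := yy_cube
  rw [← mul_assoc] at this ⊢
  rw [mul_assoc]
  exact yy_cube

lemma closure_xy : Subgroup.closure ({xx, yy} : Set Q) = ⊤ := by
  rw [Subgroup.eq_top_iff']
  intro q
  obtain ⟨w, rfl⟩ := μ_surj q
  induction w using FreeGroup.induction_on with
  | C1 => exact (map_one μ) ▸ one_mem _
  | of b =>
    cases b
    · exact Subgroup.subset_closure (Or.inl rfl)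
    · have h : (μ (FreeGroup.of true) : Q) = yy * xx⁻¹ := by
        rw [yy, xx, _root_.map_mul]
        show μ (pure true) = μ (pure true) * μ (FreeGroup.of false) * (μ (FreeGroup.of false))⁻¹
        rw [mul_assoc, mul_inv_cancel, mul_one]
      rw [h]
      exact mul_mem (Subgroup.subset_closure (by simp)) (inv_mem (Subgroup.subset_closure (by simp)))
  | inv_of b hb => rw [map_inv]; exact inv_mem hb
  | mul v w hv hw => rw [_root_.map_mul]; exact mul_mem hv hw

inductive Ltr | A | B | B2
deriving DecidableEq

open Ltr

def cls : Ltr → Bool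
| A => false
| _ => true

noncomputable def evQ : Ltr → Q
| A => xx
| B => yy
| B2 => yy * yy

def Alt (l : List Ltr) : Prop := List.Chain' (fun p q => cls p ≠ cls q) l

def consL : Ltr → List Ltr → List Ltr
| c, [] => [c]
| A, A :: rest => rest
| A, B :: rest => A :: B :: rest
| A, B2 :: rest => A :: B2 :: rest
| B, A :: rest => B :: A :: rest
| B, B :: rest => B2 :: rest
| B, B2 :: rest => rest
| B2, A :: rest => B2 :: A :: rest
| B2, B :: rest => rest
| B2, B2 :: rest => B :: rest

lemma alt_tail {d : Ltr} {rest : List Ltr} (h : Alt (d :: rest)) : Alt rest :=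
  List.IsChain.tail h

lemma alt_cons_of_cls {c d : Ltr} {rest : List Ltr} (h : Alt (d :: rest)) (hcd : cls c = cls d) :
    Alt (c :: rest) := by
  cases rest with
  | nil => exact List.isChain_singleton _
  | cons e tail =>
    rw [Alt, List.Chain', List.isChain_cons_cons] at h ⊢
    exact ⟨hcd ▸ h.1, h.2⟩

lemma alt_consL (c : Ltr) {l : List Ltr} (h : Alt l) : Alt (consL c l) := by
  cases l with
  | nil => cases c <;> exact List.isChain_singleton _
  | cons d rest =>
    cases c <;> cases d <;> simp only [consL]
    · exact alt_tail h
    · exact List.isChain_cons_cons.mpr ⟨by simp [cls], h⟩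
    · exact List.isChain_cons_cons.mpr ⟨by simp [cls], h⟩
    · exact List.isChain_cons_cons.mpr ⟨by simp [cls], h⟩
    · exact alt_cons_of_cls h rfl
    · exact alt_tail h
    · exact List.isChain_cons_cons.mpr ⟨by simp [cls], h⟩
    · exact alt_tail h
    · exact alt_cons_of_cls h rfl

noncomputable def evProd (l : List Ltr) : Q := (l.map evQ).prod

lemma evProd_cons (c : Ltr) (l : List Ltr) : evProd (c :: l) = evQ c * evProd l := by
  simp [evProd]

lemma yy_cube' : yy * yy * yy = 1 := by rw [mul_assoc]; exact yy_cube

lemma evProd_consL (c : Ltr) (l : List Ltr) : evProd (consL c l) = evQ c * evProd l := by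
  cases l with
  | nil => simp [consL, evProd]
  | cons d rest =>
    cases c <;> cases d <;> simp only [consL]
    · rw [evProd_cons]
      simp only [evQ]
      rw [← mul_assoc, xx_sq, one_mul]
    · exact evProd_cons _ _
    · exact evProd_cons _ _
    · exact evProd_cons _ _
    · rw [evProd_cons, evProd_cons]
      simp only [evQ]
      rw [mul_assoc]
    · rw [evProd_cons]
      simp only [evQ]
      rw [← mul_assoc, yy_cube, one_mul]
    · exact evProd_cons _ _
    · rw [evProd_cons]
      simp only [evQ]
      rw [← mul_assoc, yy_cube', one_mul]
    · rw [evProd_cons, evProd_cons]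
      simp only [evQ]
      rw [← mul_assoc, mul_assoc yy yy (yy*yy), yy_cube, mul_one]

lemma exists_alt (q : Q) : ∃ l : List Ltr, Alt l ∧ evProd l = q := by
  have hq : q ∈ Subgroup.closure ({xx, yy} : Set Q) := by rw [closure_xy]; trivial
  induction hq using Subgroup.closure_induction_left with
  | one => exact ⟨[], List.isChain_nil, by simp [evProd]⟩
  | mul_left g hg p hp ih =>
    obtain ⟨l, hl, hev⟩ := ih
    rcases hg with rfl | rfl
    · exact ⟨consL A l, alt_consL A hl, by rw [evProd_consL, hev]; rfl⟩
    · exact ⟨consL B l, alt_consL B hl, by rw [evProd_consL, hev]; rfl⟩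
  | inv_mul_cancel g hg p hp ih =>
    obtain ⟨l, hl, hev⟩ := ih
    rcases hg with rfl | rfl
    · refine ⟨consL A l, alt_consL A hl, ?_⟩
      rw [evProd_consL, hev, xx_inv]
      rfl
    · refine ⟨consL B2 l, alt_consL B2 hl, ?_⟩
      rw [evProd_consL, hev, yy_inv]
      rfl

lemma N_le_ker : NN ≤ φ.ker := by
  apply Subgroup.normalClosure_le_normal
  rintro w (rfl | rfl)
  · rw [SetLike.mem_coe, MonoidHom.mem_ker, map_pow, φ_R, pow_two, r_sq]
  · rw [SetLike.mem_coe, MonoidHom.mem_ker, map_pow, _root_.map_mul, φ_T, φ_R]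
    rw [pow_succ, pow_two, mul_assoc]
    exact tr_cube

noncomputable def π : Q →* PSL2Z := QuotientGroup.lift NN φ N_le_ker

lemma π_μ (w : FreeGroup Bool) : π (μ w) = φ w := rfl

noncomputable def evP : Ltr → PSL2Z
| A => r
| B => t * r
| B2 => (t * r) * (t * r)

lemma π_evQ (c : Ltr) : π (evQ c) = evP c := by
  have hx : π xx = r := by rw [xx, π_μ, φ_R]
  have hy : π yy = t * r := by rw [yy, π_μ, _root_.map_mul, φ_T, φ_R]
  cases c <;> simp only [evQ, evP, _root_.map_mul, hx, hy]

lemma π_evProd (l : List Ltr) : π (evProd l) = (l.map evP).prod := by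
  induction l with
  | nil => simp [evProd]
  | cons c l ih =>
    rw [evProd_cons, _root_.map_mul, π_evQ, ih, List.map_cons, List.prod_cons]

/-- Pair-form lists: concatenations of blocks `[B, A]` or `[B2, A]`. -/
inductive Pform : List Ltr → Prop
| nil : Pform []
| consB {l} : Pform l → Pform (B :: A :: l)
| consB2 {l} : Pform l → Pform (B2 :: A :: l)

def Lmat : SL(2, ℤ) := ⟨!![1, 0; 1, 1], by norm_num [Matrix.det_fin_two_of]⟩

lemma evP_BA : evP B * evP A = ψ Tmat := by
  show (t * r) * r = ψ Tmat
  rw [mul_assoc, r_sq, mul_one, t_eq]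

lemma TST : Tmat * Smat * Tmat = Lmat := by
  ext i j
  simp only [Matrix.SpecialLinearGroup.coe_mul]; simp only [Smat, Tmat, Lmat]
  fin_cases i <;> fin_cases j <;> simp [Matrix.mul_apply, Fin.sum_univ_two]

lemma evP_B2A : evP B2 * evP A = ψ Lmat := by
  show ((t * r) * (t * r)) * r = ψ Lmat
  rw [mul_assoc (t*r) (t*r) r, mul_assoc t r r, r_sq, mul_one]
  rw [t_eq, r_eq, ← _root_.map_mul, ← _root_.map_mul, ← TST, mul_assoc]

lemma Tmul_coe (M : SL(2,ℤ)) : ((Tmat * M : SL(2,ℤ)) : Matrix (Fin 2) (Fin 2) ℤ) =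
    !![(M : Matrix (Fin 2) (Fin 2) ℤ) 0 0 + (M : Matrix (Fin 2) (Fin 2) ℤ) 1 0,
       (M : Matrix (Fin 2) (Fin 2) ℤ) 0 1 + (M : Matrix (Fin 2) (Fin 2) ℤ) 1 1;
       (M : Matrix (Fin 2) (Fin 2) ℤ) 1 0, (M : Matrix (Fin 2) (Fin 2) ℤ) 1 1] := by
  ext i j
  rw [Matrix.SpecialLinearGroup.coe_mul]
  fin_cases i <;> fin_cases j <;> simp [Tmat, Matrix.mul_apply, Fin.sum_univ_two]

lemma Lmul_coe (M : SL(2,ℤ)) : ((Lmat * M : SL(2,ℤ)) : Matrix (Fin 2) (Fin 2) ℤ) =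
    !![(M : Matrix (Fin 2) (Fin 2) ℤ) 0 0, (M : Matrix (Fin 2) (Fin 2) ℤ) 0 1;
       (M : Matrix (Fin 2) (Fin 2) ℤ) 0 0 + (M : Matrix (Fin 2) (Fin 2) ℤ) 1 0,
       (M : Matrix (Fin 2) (Fin 2) ℤ) 0 1 + (M : Matrix (Fin 2) (Fin 2) ℤ) 1 1] := by
  ext i j
  rw [Matrix.SpecialLinearGroup.coe_mul]
  fin_cases i <;> fin_cases j <;> simp [Lmat, Matrix.mul_apply, Fin.sum_univ_two]

lemma master {l : List Ltr} (h : Pform l) :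
    ∃ M : SL(2,ℤ), (l.map evP).prod = ψ M ∧
      (∀ i j, 0 ≤ (M : Matrix (Fin 2) (Fin 2) ℤ) i j) ∧
      1 ≤ (M : Matrix (Fin 2) (Fin 2) ℤ) 0 0 ∧
      1 ≤ (M : Matrix (Fin 2) (Fin 2) ℤ) 1 1 ∧
      (l ≠ [] → 1 ≤ (M : Matrix (Fin 2) (Fin 2) ℤ) 0 1 + (M : Matrix (Fin 2) (Fin 2) ℤ) 1 0) := by
  induction h with
  | nil =>
    refine ⟨1, by simp, ?_, by simp, by simp, by simp⟩
    intro i j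
    fin_cases i <;> fin_cases j <;> simp
  | @consB l hl ih =>
    obtain ⟨M, hev, h0, h1, h2, _⟩ := ih
    have e00 := h0 0 0; have e01 := h0 0 1; have e10 := h0 1 0; have e11 := h0 1 1
    refine ⟨Tmat * M, ?_, ?_, ?_, ?_, ?_⟩
    · rw [List.map_cons, List.map_cons, List.prod_cons, List.prod_cons, ← mul_assoc,
        evP_BA, hev, ← _root_.map_mul]
    · intro i j
      rw [Tmul_coe]
      fin_cases i <;> fin_cases j <;> simp <;> omega
    · rw [Tmul_coe]; simp; omega
    · rw [Tmul_coe]; simp; omega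
    · intro _
      rw [Tmul_coe]; simp; omega
  | @consB2 l hl ih =>
    obtain ⟨M, hev, h0, h1, h2, _⟩ := ih
    have e00 := h0 0 0; have e01 := h0 0 1; have e10 := h0 1 0; have e11 := h0 1 1
    refine ⟨Lmat * M, ?_, ?_, ?_, ?_, ?_⟩
    · rw [List.map_cons, List.map_cons, List.prod_cons, List.prod_cons, ← mul_assoc,
        evP_B2A, hev, ← _root_.map_mul]
    · intro i j
      rw [Lmul_coe]
      fin_cases i <;> fin_cases j <;> simp <;> omega
    · rw [Lmul_coe]; simp; omega
    · rw [Lmul_coe]; simp; omega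
    · intro _
      rw [Lmul_coe]; simp; omega

lemma decomp : ∀ (n : ℕ) (l : List Ltr), l.length ≤ n → Alt l → l.head? ≠ some A →
    ∃ core, Pform core ∧ (l = core ∨ l = core ++ [B] ∨ l = core ++ [B2]) := by
  intro n
  induction n with
  | zero =>
    intro l hlen _ _
    have : l = [] := List.eq_nil_of_length_eq_zero (Nat.le_zero.mp hlen)
    exact ⟨[], Pform.nil, Or.inl this⟩
  | succ n ih =>
    intro l hlen halt hhead
    match l with
    | [] => exact ⟨[], Pform.nil, Or.inl rfl⟩
    | [c] =>
      cases c
      · exact absurd rfl hhead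
      · exact ⟨[], Pform.nil, Or.inr (Or.inl rfl)⟩
      · exact ⟨[], Pform.nil, Or.inr (Or.inr rfl)⟩
    | c :: d :: rest =>
      have hcd : cls c ≠ cls d := (List.isChain_cons_cons.mp halt).1
      have hrest : Alt (d :: rest) := (List.isChain_cons_cons.mp halt).2
      have hcA : c ≠ A := fun hc => hhead (by rw [hc]; rfl)
      have hclsc : cls c = true := by cases c <;> simp_all [cls]
      have hdA : d = A := by
        cases d <;> simp_all [cls]
      subst hdA
      have hrest' : Alt rest := alt_tail hrest
      have hresthead : rest.head? ≠ some A := by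
        cases rest with
        | nil => simp
        | cons e tail =>
          have he : cls A ≠ cls e := (List.isChain_cons_cons.mp hrest).1
          cases e <;> simp_all [cls]
      have hlen' : rest.length ≤ n := by
        simp only [List.length_cons] at hlen
        omega
      obtain ⟨core, hcore, hform⟩ := ih rest hlen' hrest' hresthead
      cases c
      · exact absurd rfl hcA
      · refine ⟨B :: A :: core, Pform.consB hcore, ?_⟩
        rcases hform with rfl | rfl | rfl
        · exact Or.inl rfl
        · exact Or.inr (Or.inl rfl)
        · exact Or.inr (Or.inr rfl)
      · refine ⟨B2 :: A :: core, Pform.consB2 hcore, ?_⟩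
        rcases hform with rfl | rfl | rfl
        · exact Or.inl rfl
        · exact Or.inr (Or.inl rfl)
        · exact Or.inr (Or.inr rfl)

lemma ψ_one_iff {W : SL(2,ℤ)} : ψ W = 1 ↔ W = 1 ∨ W = -1 := by
  rw [ψ_eq, QuotientGroup.eq_one_iff]
  exact mem_pmOne_iff

lemma TS_coe : ((Tmat * Smat : SL(2,ℤ)) : Matrix (Fin 2) (Fin 2) ℤ) = !![1,-1;1,0] := by
  ext i j
  rw [Matrix.SpecialLinearGroup.coe_mul]
  fin_cases i <;> fin_cases j <;> simp [Tmat, Smat, Matrix.mul_apply, Fin.sum_univ_two]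

lemma TS2_coe : (((Tmat * Smat) * (Tmat * Smat) : SL(2,ℤ)) : Matrix (Fin 2) (Fin 2) ℤ) = !![0,-1;1,-1] := by
  rw [Matrix.SpecialLinearGroup.coe_mul, TS_coe]
  ext i j
  fin_cases i <;> fin_cases j <;> simp [Matrix.mul_apply, Fin.sum_univ_two]

lemma one_coe : ((1 : SL(2,ℤ)) : Matrix (Fin 2) (Fin 2) ℤ) = !![1,0;0,1] := by
  ext i j
  fin_cases i <;> fin_cases j <;> simp

lemma negone_coe : ((-1 : SL(2,ℤ)) : Matrix (Fin 2) (Fin 2) ℤ) = !![-1,0;0,-1] := by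
  ext i j
  fin_cases i <;> fin_cases j <;> simp

lemma mulTS_coe (M : SL(2,ℤ)) : ((M * (Tmat * Smat) : SL(2,ℤ)) : Matrix (Fin 2) (Fin 2) ℤ) =
    !![(M : Matrix (Fin 2) (Fin 2) ℤ) 0 0 + (M : Matrix (Fin 2) (Fin 2) ℤ) 0 1, -(M : Matrix (Fin 2) (Fin 2) ℤ) 0 0;
       (M : Matrix (Fin 2) (Fin 2) ℤ) 1 0 + (M : Matrix (Fin 2) (Fin 2) ℤ) 1 1, -(M : Matrix (Fin 2) (Fin 2) ℤ) 1 0] := by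
  rw [Matrix.SpecialLinearGroup.coe_mul, TS_coe]
  ext i j
  fin_cases i <;> fin_cases j <;> simp [Matrix.mul_apply, Fin.sum_univ_two] <;> ring

lemma mulTS2_coe (M : SL(2,ℤ)) : ((M * ((Tmat * Smat) * (Tmat * Smat)) : SL(2,ℤ)) : Matrix (Fin 2) (Fin 2) ℤ) =
    !![(M : Matrix (Fin 2) (Fin 2) ℤ) 0 1, -(M : Matrix (Fin 2) (Fin 2) ℤ) 0 0 - (M : Matrix (Fin 2) (Fin 2) ℤ) 0 1;
       (M : Matrix (Fin 2) (Fin 2) ℤ) 1 1, -(M : Matrix (Fin 2) (Fin 2) ℤ) 1 0 - (M : Matrix (Fin 2) (Fin 2) ℤ) 1 1] := by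
  rw [Matrix.SpecialLinearGroup.coe_mul, TS2_coe]
  ext i j
  fin_cases i <;> fin_cases j <;> simp [Matrix.mul_apply, Fin.sum_univ_two] <;> ring

lemma Smul_coe (M : SL(2,ℤ)) : ((Smat * M : SL(2,ℤ)) : Matrix (Fin 2) (Fin 2) ℤ) =
    !![-(M : Matrix (Fin 2) (Fin 2) ℤ) 1 0, -(M : Matrix (Fin 2) (Fin 2) ℤ) 1 1;
       (M : Matrix (Fin 2) (Fin 2) ℤ) 0 0, (M : Matrix (Fin 2) (Fin 2) ℤ) 0 1] := by
  rw [Matrix.SpecialLinearGroup.coe_mul]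
  ext i j
  fin_cases i <;> fin_cases j <;> simp [Smat, Matrix.mul_apply, Fin.sum_univ_two]

lemma entry {X Z : SL(2,ℤ)} (h : X = Z) (i j : Fin 2) :
    (X : Matrix (Fin 2) (Fin 2) ℤ) i j = (Z : Matrix (Fin 2) (Fin 2) ℤ) i j := by rw [h]

lemma key {core : List Ltr} (hcore : Pform core) (i : Bool) (E : SL(2,ℤ))
    (hE : E = 1 ∨ E = Tmat * Smat ∨ E = (Tmat * Smat) * (Tmat * Smat))
    (heq : (cond i r 1) * ((core.map evP).prod * ψ E) = 1) :
    i = false ∧ E = 1 ∧ core = [] := by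
  obtain ⟨M, hev, h0, h1, h2, h3⟩ := master hcore
  have e00 := h0 0 0; have e01 := h0 0 1; have e10 := h0 1 0; have e11 := h0 1 1
  rw [hev, ← _root_.map_mul] at heq
  cases i
  · -- no leading r
    simp only [cond] at heq
    rw [one_mul, ψ_one_iff] at heq
    rcases hE with rfl | rfl | rfl
    · rw [mul_one] at heq
      refine ⟨rfl, rfl, ?_⟩
      rcases heq with rfl | rfl
      · by_contra hne
        have := h3 hne
        rw [one_coe] at this
        simp at this
      · exfalso
        rw [negone_coe] at h1
        simp at h1
    · exfalso
      rcases heq with h | h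
      · have := entry h 0 1
        rw [mulTS_coe, one_coe] at this
        simp at this
        omega
      · have := entry h 0 0
        rw [mulTS_coe, negone_coe] at this
        simp at this
        omega
    · exfalso
      rcases heq with h | h
      · have := entry h 0 1
        rw [mulTS2_coe, one_coe] at this
        simp at this
        omega
      · have := entry h 0 0
        rw [mulTS2_coe, negone_coe] at this
        simp at this
        omega
  · -- leading r
    exfalso
    simp only [cond] at heq
    rw [r_eq, ← _root_.map_mul, ψ_one_iff] at heq
    rcases hE with rfl | rfl | rfl
    · rw [mul_one] at heq
      rcases heq with h | h
      · have := entry h 0 0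
        rw [Smul_coe, one_coe] at this
        simp at this
        omega
      · have := entry h 0 1
        rw [Smul_coe, negone_coe] at this
        simp at this
        omega
    · rcases heq with h | h
      · have := entry h 0 0
        rw [Smul_coe, mulTS_coe, one_coe] at this
        simp at this
        omega
      · have := entry h 1 0
        rw [Smul_coe, mulTS_coe, negone_coe] at this
        simp at this
        omega
    · rcases heq with h | h
      · have := entry h 0 0
        rw [Smul_coe, mulTS2_coe, one_coe] at this
        simp at this
        omega
      · have := entry h 0 1
        rw [Smul_coe, mulTS2_coe, negone_coe] at this
        simp at this
        omega

lemma evP_A : evP A = r := rfl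
lemma evP_B_eq : evP B = ψ (Tmat * Smat) := by
  show t * r = _
  rw [t_eq, r_eq, ← _root_.map_mul]
lemma evP_B2_eq : evP B2 = ψ ((Tmat * Smat) * (Tmat * Smat)) := by
  show (t * r) * (t * r) = _
  rw [t_eq, r_eq, ← _root_.map_mul, ← _root_.map_mul]

lemma TS_ne_one : Tmat * Smat ≠ 1 := by
  intro h
  have := entry h 0 1
  rw [TS_coe, one_coe] at this
  simp at this

lemma TS2_ne_one : (Tmat * Smat) * (Tmat * Smat) ≠ 1 := by
  intro h
  have := entry h 0 1
  rw [TS2_coe, one_coe] at this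
  simp at this

lemma alt_eval_eq_one {l : List Ltr} (h : Alt l) (hp : (l.map evP).prod = 1) : l = [] := by
  cases hl : l with
  | nil => rfl
  | cons c rest =>
    subst hl
    exfalso
    have hrest : Alt rest := alt_tail h
    cases c
    case A =>
      have hresthead : rest.head? ≠ some A := by
        cases rest with
        | nil => simp
        | cons e tail =>
          have he : cls A ≠ cls e := (List.isChain_cons_cons.mp h).1
          cases e <;> simp_all [cls]
      obtain ⟨core, hcore, hform⟩ := decomp rest.length rest le_rfl hrest hresthead
      simp only [List.map_cons, List.prod_cons] at hp
      rcases hform with hf | hf | hf <;> rw [hf] at hp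
      · have heq : (cond true r 1) * ((core.map evP).prod * ψ (1 : SL(2,ℤ))) = 1 := by
          rw [_root_.map_one, mul_one]
          exact hp
        exact absurd (key hcore true 1 (Or.inl rfl) heq).1 (by simp)
      · simp only [List.map_append, List.prod_append, List.map_cons, List.prod_cons,
          List.map_nil, List.prod_nil, mul_one] at hp
        have heq : (cond true r 1) * ((core.map evP).prod * ψ (Tmat * Smat)) = 1 := by
          rw [← evP_B_eq]
          exact hp
        exact absurd (key hcore true _ (Or.inr (Or.inl rfl)) heq).1 (by simp)
      · simp only [List.map_append, List.prod_append, List.map_cons, List.prod_cons,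
          List.map_nil, List.prod_nil, mul_one] at hp
        have heq : (cond true r 1) * ((core.map evP).prod * ψ ((Tmat * Smat) * (Tmat * Smat))) = 1 := by
          rw [← evP_B2_eq]
          exact hp
        exact absurd (key hcore true _ (Or.inr (Or.inr rfl)) heq).1 (by simp)
    case B =>
      obtain ⟨core, hcore, hform⟩ := decomp _ (B :: rest) le_rfl h (by simp)
      rcases hform with hf | hf | hf
      · rw [hf] at hp
        have heq : (cond false r 1) * ((core.map evP).prod * ψ (1 : SL(2,ℤ))) = 1 := by
          rw [_root_.map_one, mul_one, cond, one_mul]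
          exact hp
        have := (key hcore false 1 (Or.inl rfl) heq).2.2
        rw [this] at hf
        simp at hf
      · rw [hf] at hp
        simp only [List.map_append, List.prod_append, List.map_cons, List.prod_cons,
          List.map_nil, List.prod_nil, mul_one] at hp
        have heq : (cond false r 1) * ((core.map evP).prod * ψ (Tmat * Smat)) = 1 := by
          rw [cond, one_mul, ← evP_B_eq]
          exact hp
        exact TS_ne_one (key hcore false _ (Or.inr (Or.inl rfl)) heq).2.1
      · rw [hf] at hp
        simp only [List.map_append, List.prod_append, List.map_cons, List.prod_cons,
          List.map_nil, List.prod_nil, mul_one] at hp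
        have heq : (cond false r 1) * ((core.map evP).prod * ψ ((Tmat * Smat) * (Tmat * Smat))) = 1 := by
          rw [cond, one_mul, ← evP_B2_eq]
          exact hp
        exact TS2_ne_one (key hcore false _ (Or.inr (Or.inr rfl)) heq).2.1
    case B2 =>
      obtain ⟨core, hcore, hform⟩ := decomp _ (B2 :: rest) le_rfl h (by simp)
      rcases hform with hf | hf | hf
      · rw [hf] at hp
        have heq : (cond false r 1) * ((core.map evP).prod * ψ (1 : SL(2,ℤ))) = 1 := by
          rw [_root_.map_one, mul_one, cond, one_mul]
          exact hp
        have := (key hcore false 1 (Or.inl rfl) heq).2.2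
        rw [this] at hf
        simp at hf
      · rw [hf] at hp
        simp only [List.map_append, List.prod_append, List.map_cons, List.prod_cons,
          List.map_nil, List.prod_nil, mul_one] at hp
        have heq : (cond false r 1) * ((core.map evP).prod * ψ (Tmat * Smat)) = 1 := by
          rw [cond, one_mul, ← evP_B_eq]
          exact hp
        exact TS_ne_one (key hcore false _ (Or.inr (Or.inl rfl)) heq).2.1
      · rw [hf] at hp
        simp only [List.map_append, List.prod_append, List.map_cons, List.prod_cons,
          List.map_nil, List.prod_nil, mul_one] at hp
        have heq : (cond false r 1) * ((core.map evP).prod * ψ ((Tmat * Smat) * (Tmat * Smat))) = 1 := by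
          rw [cond, one_mul, ← evP_B2_eq]
          exact hp
        exact TS2_ne_one (key hcore false _ (Or.inr (Or.inr rfl)) heq).2.1

/-- `φ` is surjective, with kernel the normal closure of `{R², (TR)³}`. -/
theorem phi_surjective_ker_eq_normalClosure :
    Function.Surjective φ ∧
      φ.ker = Subgroup.normalClosure
        {FreeGroup.of false ^ 2, (FreeGroup.of true * FreeGroup.of false) ^ 3} := by
  refine ⟨φ_surj, ?_⟩
  show φ.ker = NN
  apply le_antisymm
  · intro w hw
    rw [MonoidHom.mem_ker] at hw
    have hπ : π (μ w) = 1 := by rw [π_μ]; exact hw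
    obtain ⟨l, hl, hev⟩ := exists_alt (μ w)
    have hprod : (l.map evP).prod = 1 := by
      rw [← π_evProd, hev, hπ]
    have : l = [] := alt_eval_eq_one hl hprod
    subst this
    have : μ w = 1 := by rw [← hev]; simp [evProd]
    rwa [show μ = QuotientGroup.mk' NN from rfl, QuotientGroup.mk'_apply,
      QuotientGroup.eq_one_iff] at this
  · exact N_le_ker
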